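/- arXiv:1912.00922 — 11 statements merged into one kernel-verified Lean document; each statement's English description precedes it below -/
import Mathlib

section
/- If A is a nil-good ring, then the Laurent polynomial ring R = ⊕_{n∈ℤ} A·Xⁿ (with R₀ = A) is a ℤ-graded nil-good ring. -/
/-- A ring is *nil-good* if every element is either nilpotent or a sum of a unit
and a nilpotent. -/
def IsNilGood (R : Type*) [Ring R] : Prop :=
  ∀ a : R, IsNilpotent a ∨ ∃ u n : R, IsUnit u ∧ IsNilpotent n ∧ a = u + n

/-- A `G`-graded ring (given by the family of components `𝒜`) is *graded nil-good*
if every homogeneous element is either nilpotent or a sum of a homogeneous unit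
and a homogeneous nilpotent. -/
def IsGradedNilGood {G R : Type*} [Ring R] (𝒜 : G → AddSubgroup R) : Prop :=
  ∀ a : R, (∃ g, a ∈ 𝒜 g) →
    IsNilpotent a ∨
      ∃ u n : R, IsUnit u ∧ (∃ g, u ∈ 𝒜 g) ∧ IsNilpotent n ∧ (∃ g, n ∈ 𝒜 g) ∧ a = u + n

/-- The `n`-th component of the natural `ℤ`-grading of the Laurent polynomial ring
`A[T;T⁻¹]`: the monomials `a·Xⁿ`. -/
def laurentGrade (A : Type*) [Ring A] (n : ℤ) : AddSubgroup (LaurentPolynomial A) where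
  carrier := {x | ∃ a : A, x = LaurentPolynomial.C a * LaurentPolynomial.T n}
  add_mem' := by
    rintro x y ⟨a, rfl⟩ ⟨b, rfl⟩
    exact ⟨a + b, by rw [map_add, add_mul]⟩
  zero_mem' := ⟨0, by simp⟩
  neg_mem' := by
    rintro x ⟨a, rfl⟩
    exact ⟨-a, by rw [map_neg, neg_mul]⟩

/-- If `A` is a nil-good ring, then the Laurent polynomial ring `⊕_{n ∈ ℤ} A·Xⁿ`
(with `R₀ = A`) is a `ℤ`-graded nil-good ring. -/
theorem stmt0 (A : Type*) [Ring A] (hA : IsNilGood A) :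
    IsGradedNilGood (laurentGrade A) := by
  rintro a ⟨g, b, rfl⟩
  rcases hA b with hb | ⟨u, m, hu, ⟨k, hk⟩, rfl⟩
  · left
    obtain ⟨k, hk⟩ := hb
    exact ⟨k, by
      rw [(LaurentPolynomial.commute_T g (LaurentPolynomial.C b)).symm.mul_pow,
        ← map_pow, hk, map_zero, zero_mul]⟩
  · right
    refine ⟨LaurentPolynomial.C u * LaurentPolynomial.T g,
      LaurentPolynomial.C m * LaurentPolynomial.T g,
      (hu.map LaurentPolynomial.C).mul (LaurentPolynomial.isUnit_T g),
      ⟨g, u, rfl⟩, ⟨k, ?_⟩, ⟨g, m, rfl⟩, ?_⟩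
    · rw [(LaurentPolynomial.commute_T g (LaurentPolynomial.C m)).symm.mul_pow,
        ← map_pow, hk, map_zero, zero_mul]
    · rw [map_add, add_mul]
end

section
/- The ℤ-graded ring R = ⊕_{n∈ℤ} ℤ₂·Xⁿ (Laurent polynomials over ℤ₂) is graded nil-good but is not a nil-good ring; specifically, the element 1 + X is neither nilpotent nor a sum of a unit and a nilpotent. -/
/-- The ring hom `ℤ₂[T,T⁻¹] → ℤ₂` sending `T ↦ 1` (sum of coefficients). -/
noncomputable def laurentEv : LaurentPolynomial (ZMod 2) →+* ZMod 2 :=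
  AddMonoidAlgebra.liftNCRingHom (RingHom.id (ZMod 2)) 1 (fun _ _ => Commute.all _ _)

lemma laurentEv_onePlusT : laurentEv (1 + LaurentPolynomial.T 1) = 0 := by
  rw [map_add, map_one]
  show 1 + AddMonoidAlgebra.liftNC _ _ (AddMonoidAlgebra.single 1 1) = 0
  rw [AddMonoidAlgebra.liftNC_single]
  decide

lemma onePlusT_ne_zero : (1 + LaurentPolynomial.T 1 : LaurentPolynomial (ZMod 2)) ≠ 0 := by
  intro h
  have h0 : (1 + LaurentPolynomial.T 1 : LaurentPolynomial (ZMod 2)).coeff 1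
      = (0 : LaurentPolynomial (ZMod 2)).coeff 1 := by rw [h]
  rw [AddMonoidAlgebra.coeff_add, Finsupp.add_apply, AddMonoidAlgebra.one_def,
    AddMonoidAlgebra.coeff_single] at h0
  have h1 : (Finsupp.single (0:ℤ) (1:ZMod 2)) 1 = 0 := Finsupp.single_eq_of_ne' (by norm_num)
  have h2 : (LaurentPolynomial.T 1 : LaurentPolynomial (ZMod 2)).coeff 1 = 1 := Finsupp.single_eq_same
  rw [h1, h2, AddMonoidAlgebra.coeff_zero, Finsupp.coe_zero, Pi.zero_apply, zero_add] at h0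
  exact one_ne_zero h0

lemma onePlusT_not_unit : ¬ IsUnit (1 + LaurentPolynomial.T 1 : LaurentPolynomial (ZMod 2)) := by
  intro hu
  have := (hu.map laurentEv)
  rw [laurentEv_onePlusT, isUnit_zero_iff] at this
  exact zero_ne_one this

/-- The Laurent polynomial ring over `ℤ₂` is graded nil-good but is not a nil-good
ring: the element `1 + X` is neither nilpotent nor a sum of a unit and a nilpotent. -/
theorem stmt2 :
    IsGradedNilGood (laurentGrade (ZMod 2)) ∧
    ¬ IsNilGood (LaurentPolynomial (ZMod 2)) ∧
    ¬ IsNilpotent (1 + LaurentPolynomial.T 1 : LaurentPolynomial (ZMod 2)) ∧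
    ¬ ∃ u n : LaurentPolynomial (ZMod 2), IsUnit u ∧ IsNilpotent n ∧
        1 + LaurentPolynomial.T 1 = u + n := by
  have hnz := onePlusT_ne_zero
  have hnotnil : ¬ IsNilpotent (1 + LaurentPolynomial.T 1 : LaurentPolynomial (ZMod 2)) :=
    fun h => hnz h.eq_zero
  have hnotsum : ¬ ∃ u n : LaurentPolynomial (ZMod 2), IsUnit u ∧ IsNilpotent n ∧
      1 + LaurentPolynomial.T 1 = u + n := by
    rintro ⟨u, n, hu, hn, heq⟩
    rw [hn.eq_zero, add_zero] at heq
    exact onePlusT_not_unit (heq ▸ hu)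
  refine ⟨?_, ?_, hnotnil, hnotsum⟩
  · rintro a ⟨g, c, rfl⟩
    have hc : c = 0 ∨ c = 1 := by revert c; decide
    rcases hc with rfl | rfl
    · exact Or.inl ⟨1, by simp⟩
    · refine Or.inr ⟨LaurentPolynomial.T g, 0, LaurentPolynomial.isUnit_T g,
        ⟨g, 1, by simp⟩, IsNilpotent.zero, ⟨0, (laurentGrade (ZMod 2) 0).zero_mem⟩, by simp⟩
  · intro h
    rcases h (1 + LaurentPolynomial.T 1) with h1 | ⟨u, n, hu, hn, heq⟩
    · exact hnotnil h1
    · exact hnotsum ⟨u, n, hu, hn, heq⟩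
end

section
/- The 2×2 matrix ring M₂(ℤ₂), graded by the cyclic group G = {e, g} of order 2 with M₂(ℤ₂)_e the diagonal matrices and M₂(ℤ₂)_g the antidiagonal matrices, is a nil-good ring but is not graded nil-good: the homogeneous element diag(1,0) is neither nilpotent nor a sum of a homogeneous unit and a homogeneous nilpotent. -/
/-- The even (diagonal) part of `M₂(ℤ₂)`. -/
def evenPart : AddSubgroup (Matrix (Fin 2) (Fin 2) (ZMod 2)) where
  carrier := {M | M 0 1 = 0 ∧ M 1 0 = 0}
  add_mem' := by
    rintro x y ⟨hx1, hx2⟩ ⟨hy1, hy2⟩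
    exact ⟨by simp [Matrix.add_apply, hx1, hy1], by simp [Matrix.add_apply, hx2, hy2]⟩
  zero_mem' := ⟨rfl, rfl⟩
  neg_mem' := by
    rintro x ⟨hx1, hx2⟩
    exact ⟨by simp [Matrix.neg_apply, hx1], by simp [Matrix.neg_apply, hx2]⟩

/-- The odd (antidiagonal) part of `M₂(ℤ₂)`. -/
def oddPart : AddSubgroup (Matrix (Fin 2) (Fin 2) (ZMod 2)) where
  carrier := {M | M 0 0 = 0 ∧ M 1 1 = 0}
  add_mem' := by
    rintro x y ⟨hx1, hx2⟩ ⟨hy1, hy2⟩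
    exact ⟨by simp [Matrix.add_apply, hx1, hy1], by simp [Matrix.add_apply, hx2, hy2]⟩
  zero_mem' := ⟨rfl, rfl⟩
  neg_mem' := by
    rintro x ⟨hx1, hx2⟩
    exact ⟨by simp [Matrix.neg_apply, hx1], by simp [Matrix.neg_apply, hx2]⟩

/-- The `ℤ/2`-grading of `M₂(ℤ₂)`: even component the diagonal matrices, odd
component the antidiagonal matrices. -/
def mgrade : ZMod 2 → AddSubgroup (Matrix (Fin 2) (Fin 2) (ZMod 2)) :=
  fun g => if g = 0 then evenPart else oddPart

private abbrev Mat := Matrix (Fin 2) (Fin 2) (ZMod 2)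

private lemma key1 : ∀ M : Mat, M ^ 2 = 0 ∨ M ^ 7 = M := by decide

private lemma pow_six (M : Mat) (h : M ^ 7 = M) : ∀ j : ℕ, M ^ (6 * j + 1) = M := by
  intro j
  induction j with
  | zero => simpa using rfl
  | succ j ih =>
      have : 6 * (j + 1) + 1 = (6 * j + 1) + 6 := by ring
      rw [this, pow_add, ih, ← pow_succ', h]

private lemma nil_iff (M : Mat) : IsNilpotent M ↔ M ^ 2 = 0 := by
  constructor
  · rintro ⟨k, hk⟩
    rcases key1 M with h | h
    · exact h
    · have hM : M = 0 := by
        have h1 : M ^ (6 * k + 1) = M := pow_six M h k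
        have h2 : 6 * k + 1 = k + (5 * k + 1) := by ring
        rw [h2, pow_add, hk, zero_mul] at h1
        exact h1.symm
      rw [hM]; simp
  · intro h; exact ⟨2, h⟩

private lemma key2 : ∀ a : Mat,
    a ^ 2 = 0 ∨ ∃ u : Mat, (∃ v, u * v = 1 ∧ v * u = 1) ∧ (a - u) ^ 2 = 0 := by decide

private lemma key3 : ∀ u n : Mat, ((∃ v, u * v = 1) ∧ n ^ 2 = 0 ∧
    ((u 0 1 = 0 ∧ u 1 0 = 0) ∨ (u 0 0 = 0 ∧ u 1 1 = 0)) ∧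
    ((n 0 1 = 0 ∧ n 1 0 = 0) ∨ (n 0 0 = 0 ∧ n 1 1 = 0))) →
    Matrix.diagonal ![1, 0] ≠ u + n := by decide

private lemma mem_mgrade_cases {M : Mat} {g : ZMod 2} (h : M ∈ mgrade g) :
    (M 0 1 = 0 ∧ M 1 0 = 0) ∨ (M 0 0 = 0 ∧ M 1 1 = 0) := by
  by_cases hg : g = 0
  · left; simpa [mgrade, hg, evenPart] using h
  · right; simpa [mgrade, hg, oddPart] using h

/-- `M₂(ℤ₂)` graded by `ℤ/2` via diagonal/antidiagonal matrices is a nil-good ring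
but is not graded nil-good: `diag(1,0)` is a homogeneous element which is neither
nilpotent nor a sum of a homogeneous unit and a homogeneous nilpotent. -/
theorem stmt3 :
    IsNilGood (Matrix (Fin 2) (Fin 2) (ZMod 2)) ∧
    (Matrix.diagonal ![1, 0] ∈ mgrade 0) ∧
    ¬ IsNilpotent (Matrix.diagonal ![1, 0] : Matrix (Fin 2) (Fin 2) (ZMod 2)) ∧
    (¬ ∃ u n : Matrix (Fin 2) (Fin 2) (ZMod 2), IsUnit u ∧ (∃ g, u ∈ mgrade g) ∧
        IsNilpotent n ∧ (∃ g, n ∈ mgrade g) ∧ Matrix.diagonal ![1, 0] = u + n) ∧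
    ¬ IsGradedNilGood mgrade := by
  have hnot4 : ¬ ∃ u n : Mat, IsUnit u ∧ (∃ g, u ∈ mgrade g) ∧
      IsNilpotent n ∧ (∃ g, n ∈ mgrade g) ∧ Matrix.diagonal ![1, 0] = u + n := by
    rintro ⟨u, n, hu, ⟨g, hug⟩, hn, ⟨g', hng⟩, heq⟩
    refine key3 u n ⟨?_, (nil_iff n).mp hn, mem_mgrade_cases hug, mem_mgrade_cases hng⟩ heq
    obtain ⟨w, rfl⟩ := hu
    exact ⟨((w⁻¹ : Matˣ) : Mat), w.mul_inv⟩
  have hmem : (Matrix.diagonal ![1, 0] : Mat) ∈ mgrade 0 := by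
    constructor <;> simp [Matrix.diagonal]
  have hnotnil : ¬ IsNilpotent (Matrix.diagonal ![1, 0] : Mat) := by
    rw [nil_iff]; decide
  refine ⟨?_, hmem, hnotnil, hnot4, ?_⟩
  · intro a
    rcases key2 a with h | ⟨u, ⟨v, huv, hvu⟩, hnil⟩
    · exact Or.inl ⟨2, h⟩
    · exact Or.inr ⟨u, a - u, ⟨⟨u, v, huv, hvu⟩, rfl⟩, ⟨2, hnil⟩, by abel⟩
  · intro hgood
    rcases hgood (Matrix.diagonal ![1, 0]) ⟨0, hmem⟩ with h | h
    · exact hnotnil h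
    · exact hnot4 h
end

section
/- If R = ⊕_{g∈G} R_g is a G-graded nil-good ring, then the identity component R_e is a nil-good ring. -/
section Aux

variable {G R : Type*} [AddGroup G] [DecidableEq G] [Ring R]
    (𝒜 : G → AddSubgroup R) [GradedRing 𝒜]

lemma aux_coe_pow (n : 𝒜 0) : ∀ k : ℕ, ((n ^ k : 𝒜 0) : R) = (n : R) ^ k := by
  intro k
  induction k with
  | zero => simp only [pow_zero]; rfl
  | succ k ih =>
      rw [pow_succ, pow_succ, ← ih]
      rfl

lemma aux_nilp {n : 𝒜 0} (hn : IsNilpotent (n : R)) : IsNilpotent n := by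
  obtain ⟨k, hk⟩ := hn
  exact ⟨k, Subtype.ext (by rw [aux_coe_pow]; simpa using hk)⟩

lemma aux_unit {u : R} (hu : IsUnit u) (h0 : u ∈ 𝒜 0) :
    IsUnit (⟨u, h0⟩ : 𝒜 0) := by
  set v0 : R := ↑hu.unit⁻¹ with hv0
  set v : R := ((DirectSum.decompose 𝒜 v0) 0 : R) with hv
  have hvmem : v ∈ 𝒜 0 := SetLike.coe_mem _
  have h1 : u * v = 1 := by
    have := DirectSum.coe_decompose_mul_add_of_left_mem 𝒜 (b := v0) (i := 0) (j := 0) h0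
    rw [zero_add] at this
    rw [hv, ← this]
    have huv : u * v0 = 1 := by
      rw [hv0]; exact hu.mul_val_inv
    rw [huv, DirectSum.decompose_of_mem_same 𝒜 (SetLike.one_mem_graded 𝒜)]
  have h2 : v * u = 1 := by
    have := DirectSum.coe_decompose_mul_add_of_right_mem 𝒜 (a := v0) (i := 0) (j := 0) h0
    rw [add_zero] at this
    rw [hv, ← this]
    have huv : v0 * u = 1 := by
      rw [hv0]; exact hu.val_inv_mul
    rw [huv, DirectSum.decompose_of_mem_same 𝒜 (SetLike.one_mem_graded 𝒜)]
  refine ⟨⟨⟨u, h0⟩, ⟨v, hvmem⟩, Subtype.ext ?_, Subtype.ext ?_⟩, rfl⟩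
  · exact h1
  · exact h2

end Aux

/-- If `R = ⊕_{g ∈ G} R_g` is a `G`-graded nil-good ring, then the identity
component `R_e` is a nil-good ring. -/
theorem stmt4 {G R : Type*} [AddGroup G] [DecidableEq G] [Ring R]
    (𝒜 : G → AddSubgroup R) [GradedRing 𝒜]
    (h : IsGradedNilGood 𝒜) :
    IsNilGood (𝒜 0) := by
  intro a
  rcases h (↑a) ⟨0, a.2⟩ with hnil | ⟨u, n, hu, ⟨g, hgu⟩, hn, ⟨g', hgn⟩, heq⟩
  · exact Or.inl (aux_nilp 𝒜 hnil)
  · have hdec : (↑a : R) =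
        ((DirectSum.decompose 𝒜 u) 0 : R) + ((DirectSum.decompose 𝒜 n) 0 : R) := by
      conv_lhs => rw [← DirectSum.decompose_of_mem_same 𝒜 a.2, heq]
      rw [DirectSum.decompose_add, DirectSum.add_apply, AddSubgroup.coe_add]
    by_cases hg : g = 0 <;> by_cases hg' : g' = 0
    · subst hg hg'
      refine Or.inr ⟨⟨u, hgu⟩, ⟨n, hgn⟩, aux_unit 𝒜 hu hgu, aux_nilp 𝒜 hn,
        Subtype.ext heq⟩
    · -- a = u, a unit
      have hPu : ((DirectSum.decompose 𝒜 u) 0 : R) = u :=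
        DirectSum.decompose_of_mem_same 𝒜 (hg ▸ hgu)
      have hPn : ((DirectSum.decompose 𝒜 n) 0 : R) = 0 :=
        DirectSum.decompose_of_mem_ne 𝒜 hgn hg'
      have hau : (↑a : R) = u := by rw [hdec, hPu, hPn, add_zero]
      have hmem : u ∈ 𝒜 0 := hau ▸ a.2
      have : a = (⟨u, hmem⟩ : 𝒜 0) := Subtype.ext hau
      exact Or.inr ⟨a, 0, this ▸ aux_unit 𝒜 hu hmem, IsNilpotent.zero,
        (add_zero a).symm⟩
    · -- a = n, nilpotent
      have hPu : ((DirectSum.decompose 𝒜 u) 0 : R) = 0 :=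
        DirectSum.decompose_of_mem_ne 𝒜 hgu hg
      have hPn : ((DirectSum.decompose 𝒜 n) 0 : R) = n :=
        DirectSum.decompose_of_mem_same 𝒜 (hg' ▸ hgn)
      have han : (↑a : R) = n := by rw [hdec, hPu, hPn, zero_add]
      exact Or.inl (aux_nilp 𝒜 (han ▸ hn))
    · have hPu : ((DirectSum.decompose 𝒜 u) 0 : R) = 0 :=
        DirectSum.decompose_of_mem_ne 𝒜 hgu hg
      have hPn : ((DirectSum.decompose 𝒜 n) 0 : R) = 0 :=
        DirectSum.decompose_of_mem_ne 𝒜 hgn hg'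
      have ha0 : (↑a : R) = 0 := by rw [hdec, hPu, hPn, add_zero]
      exact Or.inl ⟨1, Subtype.ext (by simpa using ha0)⟩
end

section
/- Let R be a G-graded ring and I a two-sided homogeneous ideal of R that is graded-nil (every homogeneous element of I is nilpotent). Then R is graded nil-good if and only if R/I is graded nil-good. -/
section Aux

variable {G R : Type*} [AddGroup G] [DecidableEq G] [Ring R]
    (𝒜 : G → AddSubgroup R) [GradedRing 𝒜] (I : TwoSidedIdeal R)

lemma aux_mk'_eq_zero (a : R) : RingCon.mk' I.ringCon a = 0 ↔ a ∈ I := by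
  rw [show (0 : I.ringCon.Quotient) = RingCon.mk' I.ringCon 0 from (map_zero _).symm]
  change (a : I.ringCon.Quotient) = (0 : R) ↔ _
  rw [RingCon.eq, I.rel_iff, sub_zero]

/-- Lifting nilpotency of homogeneous elements along the quotient map. -/
lemma aux_nilpotent_lift
    (hnil : ∀ a ∈ I, (∃ g, a ∈ 𝒜 g) → IsNilpotent a)
    {a : R} {g : G} (ha : a ∈ 𝒜 g)
    (h : IsNilpotent (RingCon.mk' I.ringCon a)) : IsNilpotent a := by
  obtain ⟨k, hk⟩ := h
  have hk1 : (RingCon.mk' I.ringCon a) ^ (k + 1) = 0 := by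
    rw [pow_succ, hk, zero_mul]
  have hmem : a ^ (k + 1) ∈ I := by
    rw [← aux_mk'_eq_zero I, map_pow]; exact hk1
  obtain ⟨m, hm⟩ := hnil _ hmem ⟨(k + 1) • g, SetLike.pow_mem_graded _ ha⟩
  exact ⟨(k + 1) * m, by rw [pow_mul]; exact hm⟩

/-- Lifting invertibility of homogeneous elements along the quotient map. -/
lemma aux_unit_lift
    (hhom : ∀ a ∈ I, ∀ g : G, (DirectSum.decompose 𝒜 a g : R) ∈ I)
    (hnil : ∀ a ∈ I, (∃ g, a ∈ 𝒜 g) → IsNilpotent a)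
    {u : R} {g : G} (hu : u ∈ 𝒜 g)
    (h : IsUnit (RingCon.mk' I.ringCon u)) : IsUnit u := by
  obtain ⟨U, hU⟩ := h
  obtain ⟨v, hv⟩ : ∃ v, RingCon.mk' I.ringCon v = (↑U⁻¹ : I.ringCon.Quotient) :=
    Quotient.mk''_surjective _
  set w : R := (DirectSum.decompose 𝒜 v (-g) : R) with hw
  have hwmem : w ∈ 𝒜 (-g) := SetLike.coe_mem _
  -- u * v - 1 ∈ I and v * u - 1 ∈ I
  have huv : u * v - 1 ∈ I := by
    rw [← aux_mk'_eq_zero I, map_sub, map_mul, map_one, hv, ← hU, U.mul_inv, sub_self]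
  have hvu : v * u - 1 ∈ I := by
    rw [← aux_mk'_eq_zero I, map_sub, map_mul, map_one, hv, ← hU, U.inv_mul, sub_self]
  -- degree-0 components
  have h1 : u * w - 1 ∈ I := by
    have := hhom _ huv 0
    rwa [DirectSum.decompose_sub, DFinsupp.sub_apply, AddSubgroupClass.coe_sub,
      DirectSum.decompose_of_mem_same 𝒜 (SetLike.GradedOne.one_mem),
      show (0 : G) = g + -g by rw [add_neg_cancel],
      DirectSum.coe_decompose_mul_add_of_left_mem 𝒜 hu] at this
  have h2 : w * u - 1 ∈ I := by
    have := hhom _ hvu 0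
    rwa [DirectSum.decompose_sub, DFinsupp.sub_apply, AddSubgroupClass.coe_sub,
      DirectSum.decompose_of_mem_same 𝒜 (SetLike.GradedOne.one_mem),
      show (0 : G) = -g + g by rw [neg_add_cancel],
      DirectSum.coe_decompose_mul_add_of_right_mem 𝒜 hu] at this
  have hmem0 : ∀ x : R, x ∈ 𝒜 (g + -g) → x - 1 ∈ 𝒜 0 := fun x hx => by
    rw [add_neg_cancel] at hx
    exact sub_mem hx SetLike.GradedOne.one_mem
  have hn1 : IsNilpotent (u * w - 1) :=
    hnil _ h1 ⟨0, hmem0 _ (SetLike.mul_mem_graded hu hwmem)⟩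
  have hn2 : IsNilpotent (w * u - 1) := by
    refine hnil _ h2 ⟨0, ?_⟩
    have : w * u ∈ 𝒜 (-g + g) := SetLike.mul_mem_graded hwmem hu
    rw [neg_add_cancel] at this
    exact sub_mem this SetLike.GradedOne.one_mem
  have hU1 : IsUnit (u * w) := by
    have := hn1.isUnit_add_left_of_commute isUnit_one (Commute.one_right _)
    rwa [add_sub_cancel] at this
  have hU2 : IsUnit (w * u) := by
    have := hn2.isUnit_add_left_of_commute isUnit_one (Commute.one_right _)
    rwa [add_sub_cancel] at this
  obtain ⟨c₁, hc₁⟩ := hU1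
  obtain ⟨c₂, hc₂⟩ := hU2
  have hr : u * (w * ↑c₁⁻¹) = 1 := by rw [← mul_assoc, ← hc₁, c₁.mul_inv]
  have hl : (↑c₂⁻¹ * w) * u = 1 := by rw [mul_assoc, ← hc₂, c₂.inv_mul]
  have heq : (↑c₂⁻¹ * w : R) = w * ↑c₁⁻¹ := by
    calc (↑c₂⁻¹ * w : R) = (↑c₂⁻¹ * w) * (u * (w * ↑c₁⁻¹)) := by rw [hr, mul_one]
      _ = ((↑c₂⁻¹ * w) * u) * (w * ↑c₁⁻¹) := by simp [mul_assoc]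
      _ = w * ↑c₁⁻¹ := by rw [hl, one_mul]
  exact isUnit_iff_exists.2 ⟨w * ↑c₁⁻¹, hr, by rw [← heq]; exact hl⟩

end Aux

/-- Let `I` be a two-sided homogeneous ideal of a `G`-graded ring `R` that is
graded-nil (every homogeneous element of `I` is nilpotent). Then `R` is graded
nil-good if and only if `R/I` is graded nil-good with the induced grading. -/
theorem stmt8 {G R : Type*} [AddGroup G] [DecidableEq G] [Ring R]
    (𝒜 : G → AddSubgroup R) [GradedRing 𝒜]
    (I : TwoSidedIdeal R)
    (hhom : ∀ a ∈ I, ∀ g : G, (DirectSum.decompose 𝒜 a g : R) ∈ I)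
    (hnil : ∀ a ∈ I, (∃ g, a ∈ 𝒜 g) → IsNilpotent a) :
    IsGradedNilGood 𝒜 ↔
      IsGradedNilGood
        (fun g => (𝒜 g).map (RingCon.mk' I.ringCon).toAddMonoidHom) := by
  set π := RingCon.mk' I.ringCon with hπ
  constructor
  · -- R graded nil-good → R/I graded nil-good
    rintro h x ⟨g, hx⟩
    obtain ⟨a, ha, rfl⟩ := AddSubgroup.mem_map.1 hx
    rcases h a ⟨g, ha⟩ with hna | ⟨u, n, hu, ⟨gu, hgu⟩, hn, ⟨gn, hgn⟩, rfl⟩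
    · exact Or.inl (hna.map π)
    · refine Or.inr ⟨π u, π n, hu.map π, ⟨gu, AddSubgroup.mem_map.2 ⟨u, hgu, rfl⟩⟩,
        hn.map π, ⟨gn, AddSubgroup.mem_map.2 ⟨n, hgn, rfl⟩⟩, rfl⟩
  · -- R/I graded nil-good → R graded nil-good
    rintro h a ⟨g, ha⟩
    rcases h (π a) ⟨g, AddSubgroup.mem_map.2 ⟨a, ha, rfl⟩⟩ with
      hna | ⟨ub, nb, hub, ⟨g₁, hg₁⟩, hnb, ⟨g₂, hg₂⟩, heq⟩
    · exact Or.inl (aux_nilpotent_lift 𝒜 I hnil ha hna)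
    · obtain ⟨u, hu, hue⟩ := AddSubgroup.mem_map.1 hg₁
      obtain ⟨n, hn, hne⟩ := AddSubgroup.mem_map.1 hg₂
      have hue : π u = ub := hue
      have hne : π n = nb := hne
      by_cases hgg : g₁ = g
      · subst hgg
        right
        have huu : IsUnit u := aux_unit_lift 𝒜 I hhom hnil hu (hue ▸ hub)
        refine ⟨u, a - u, huu, ⟨g₁, hu⟩, ?_, ⟨g₁, sub_mem ha hu⟩, by abel⟩
        have : π (a - u) = nb := by
          rw [map_sub, hue, heq]; abel
        exact aux_nilpotent_lift 𝒜 I hnil (sub_mem ha hu) (this ▸ hnb)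
      · left
        have hxI : u + n - a ∈ I := by
          rw [← aux_mk'_eq_zero I, map_sub, map_add, hue, hne, heq, sub_self]
        have hcomp := hhom _ hxI g₁
        rw [DirectSum.decompose_sub, DirectSum.decompose_add, DFinsupp.sub_apply,
          DFinsupp.add_apply, AddSubgroupClass.coe_sub, AddSubgroup.coe_add,
          DirectSum.decompose_of_mem_same 𝒜 hu,
          DirectSum.decompose_of_mem_ne 𝒜 ha (Ne.symm hgg), sub_zero] at hcomp
        by_cases hg21 : g₂ = g₁
        · -- u + n ∈ I, so π a = 0 and a ∈ I
          rw [DirectSum.decompose_of_mem_same 𝒜 (hg21 ▸ hn)] at hcomp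
          have haI : a ∈ I := by
            rw [← aux_mk'_eq_zero I] at hcomp ⊢
            rw [map_add, hue, hne] at hcomp
            rw [heq, hcomp]
          exact hnil _ haI ⟨g, ha⟩
        · -- u ∈ I, so ub is both a unit and nilpotent: quotient is trivial
          rw [DirectSum.decompose_of_mem_ne 𝒜 hn hg21, add_zero] at hcomp
          have hunil : IsNilpotent ub := hue ▸ (hnil _ hcomp ⟨g₁, hu⟩).map π
          obtain ⟨k, hk⟩ := hunil
          have h01 : (0 : I.ringCon.Quotient) = 1 := isUnit_zero_iff.1 (hk ▸ hub.pow k)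
          have haI : a ∈ I := by
            rw [← aux_mk'_eq_zero I, ← mul_one (π a), ← h01, mul_zero]
          exact hnil _ haI ⟨g, ha⟩
end

section
/- Let R = ⊕_{g∈G} R_g be a G-graded nil-good ring with finite support (R_g = 0 for all but finitely many g). Then the graded Jacobson radical J^g(R) is a graded-nil ideal, i.e., every homogeneous element of J^g(R) is nilpotent. -/
/-- A graded-maximal ideal: a proper homogeneous ideal maximal among proper
homogeneous ideals. -/
def IsGradedMaximal {G R : Type*} [AddGroup G] [DecidableEq G] [Ring R]
    (𝒜 : G → AddSubgroup R) [GradedRing 𝒜] (I : Ideal R) : Prop :=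
  Ideal.IsHomogeneous 𝒜 I ∧ I ≠ ⊤ ∧
    ∀ J : Ideal R, Ideal.IsHomogeneous 𝒜 J → J ≠ ⊤ → I ≤ J → J = I

/-- The graded Jacobson radical: the intersection of all graded-maximal ideals. -/
def gradedJacobson {G R : Type*} [AddGroup G] [DecidableEq G] [Ring R]
    (𝒜 : G → AddSubgroup R) [GradedRing 𝒜] : Ideal R :=
  sInf {I : Ideal R | IsGradedMaximal 𝒜 I}

/-- If `R` is a `G`-graded nil-good ring with finite support, then the graded
Jacobson radical is a graded-nil ideal: all its homogeneous elements are nilpotent. -/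
theorem stmt9 {G R : Type*} [AddGroup G] [DecidableEq G] [Ring R]
    (𝒜 : G → AddSubgroup R) [GradedRing 𝒜]
    (hfin : {g : G | 𝒜 g ≠ ⊥}.Finite)
    (hR : IsGradedNilGood 𝒜) :
    ∀ a ∈ gradedJacobson 𝒜, (∃ g, a ∈ 𝒜 g) → IsNilpotent a := by
  intro a haJ hahom
  rcases hR a hahom with h | ⟨u, n, hu, ⟨gu, hugu⟩, hn, ⟨gn, hngn⟩, hau⟩
  · exact h
  -- the inverse of the homogeneous unit `u` is homogeneous of degree `-gu`
  obtain ⟨U, rfl⟩ := hu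
  set v : R := (↑U⁻¹ : R) with hv
  have huv : (U : R) * v = 1 := U.mul_inv
  have hvu : v * (U : R) = 1 := U.inv_mul
  have hkey : (U : R) * (DirectSum.decompose 𝒜 v (-gu) : R) = 1 := by
    have h1 : (DirectSum.decompose 𝒜 ((U : R) * v) (gu + -gu) : R)
        = (U : R) * (DirectSum.decompose 𝒜 v (-gu) : R) := by
      lift (U : R) to 𝒜 gu using hugu with u' hu'
      rw [DirectSum.decompose_mul, DirectSum.decompose_coe,
        DirectSum.coe_of_mul_apply_add]
    rw [huv, add_neg_cancel] at h1
    rw [← h1, DirectSum.decompose_of_mem_same 𝒜 (SetLike.one_mem_graded 𝒜)]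
  have hvmem : v ∈ 𝒜 (-gu) := by
    have : v = (DirectSum.decompose 𝒜 v (-gu) : R) := by
      calc v = v * ((U : R) * (DirectSum.decompose 𝒜 v (-gu) : R)) := by
                rw [hkey, mul_one]
        _ = (v * (U : R)) * (DirectSum.decompose 𝒜 v (-gu) : R) := by rw [mul_assoc]
        _ = (DirectSum.decompose 𝒜 v (-gu) : R) := by rw [hvu, one_mul]
    rw [this]; exact SetLike.coe_mem _
  -- `b = u⁻¹ a ∈ J^g`, and `1 - b = -(u⁻¹ n)` is homogeneous
  set b : R := v * a with hb
  have hbJ : b ∈ gradedJacobson 𝒜 := Ideal.mul_mem_left _ v haJ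
  set c : R := -(v * n) with hc
  have hbc : b + c = 1 := by
    rw [hb, hc, hau, mul_add, add_neg_cancel_right, hvu]
  have hchom : c ∈ 𝒜 (-gu + gn) := neg_mem (SetLike.mul_mem_graded hvmem hngn)
  by_cases hL : Ideal.span {c} = (⊤ : Ideal R)
  · -- then `c`, hence `n`, has a left inverse, so `1 = 0` since `n` is nilpotent
    have h1 : (1 : R) ∈ Ideal.span {c} := hL ▸ Submodule.mem_top
    obtain ⟨r, hr⟩ := Ideal.mem_span_singleton'.mp h1
    have htn : (-(r * v)) * n = 1 := by
      rw [← hr, hc]; noncomm_ring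
    obtain ⟨m, hm⟩ := hn
    have hpow : ∀ k : ℕ, (-(r * v)) ^ k * n ^ k = 1 := by
      intro k
      induction k with
      | zero => simp
      | succ k ih =>
          calc (-(r * v)) ^ (k + 1) * n ^ (k + 1)
              = (-(r * v)) ^ k * (((-(r * v))) * n) * n ^ k := by
                rw [pow_succ, pow_succ']; noncomm_ring
            _ = 1 := by rw [htn, mul_one, ih]
    have h01 : (1 : R) = 0 := by
      have := hpow m
      rw [hm, mul_zero] at this
      exact this.symm
    exact ⟨1, by rw [pow_one, ← mul_one a, h01, mul_zero]⟩
  · -- otherwise extend the proper homogeneous ideal `span {c}` to a graded-maximal ideal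
    exfalso
    have hLhom : Ideal.IsHomogeneous 𝒜 (Ideal.span {c}) := by
      apply Ideal.homogeneous_span
      rintro x hx
      rw [Set.mem_singleton_iff] at hx
      exact ⟨_, hx ▸ hchom⟩
    obtain ⟨M, hLM, hMmem, hMmax⟩ :=
      zorn_le_nonempty₀ {J : Ideal R | Ideal.IsHomogeneous 𝒜 J ∧ J ≠ ⊤}
        (fun C hC hchain y hy => by
          refine ⟨sSup C, ⟨?_, ?_⟩, fun z hz => le_sSup hz⟩
          · rw [sSup_eq_iSup']
            exact Ideal.IsHomogeneous.iSup fun J => (hC J.2).1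
          · intro htop
            have h1 : (1 : R) ∈ sSup C := htop ▸ Submodule.mem_top
            obtain ⟨J, hJC, hJ1⟩ :=
              (Submodule.mem_sSup_of_directed ⟨y, hy⟩ hchain.directedOn).1 h1
            exact (hC hJC).2 ((Ideal.eq_top_iff_one J).mpr hJ1))
        (Ideal.span {c}) ⟨hLhom, hL⟩
    have hMgm : IsGradedMaximal 𝒜 M :=
      ⟨hMmem.1, hMmem.2, fun J hJh hJt hMJ => le_antisymm (hMmax ⟨hJh, hJt⟩ hMJ) hMJ⟩
    have hbM : b ∈ M := by
      have : gradedJacobson 𝒜 ≤ M := sInf_le hMgm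
      exact this hbJ
    have hcM : c ∈ M := hLM (Ideal.subset_span rfl)
    exact hMmem.2 ((Ideal.eq_top_iff_one M).mpr (hbc ▸ M.add_mem hbM hcM))
end

section
/- Let R be a commutative G-graded nil-good ring. Then the graded Jacobson radical J^g(R) is a graded-nil ideal. -/
/-- Existence of a graded-maximal ideal in a nontrivial graded ring. -/
lemma exists_gradedMaximal {G R : Type*} [AddGroup G] [DecidableEq G] [Ring R]
    (𝒜 : G → AddSubgroup R) [GradedRing 𝒜] [Nontrivial R] :
    ∃ I : Ideal R, IsGradedMaximal 𝒜 I := by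
  obtain ⟨m, -, hm⟩ := zorn_le_nonempty₀
    {I : Ideal R | Ideal.IsHomogeneous 𝒜 I ∧ I ≠ ⊤}
    (fun c hc hchain y hy => by
      refine ⟨sSup c, ⟨?_, ?_⟩, fun z hz => le_sSup hz⟩
      · intro i r hr
        obtain ⟨J, hJ, hrJ⟩ := (Submodule.mem_sSup_of_directed ⟨y, hy⟩
          (hchain.directedOn)).mp hr
        exact le_sSup hJ ((hc hJ).1 i hrJ)
      · intro htop
        have h1 : (1 : R) ∈ sSup c := htop ▸ Submodule.mem_top
        obtain ⟨J, hJ, h1J⟩ := (Submodule.mem_sSup_of_directed ⟨y, hy⟩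
          (hchain.directedOn)).mp h1
        exact (hc hJ).2 ((Ideal.eq_top_iff_one J).mpr h1J))
    ⊥ ⟨Ideal.IsHomogeneous.bot 𝒜, bot_ne_top⟩
  exact ⟨m, hm.prop.1, hm.prop.2, fun J hJ hJt hmJ =>
    le_antisymm (hm.le_of_ge ⟨hJ, hJt⟩ hmJ) hmJ⟩


/-- If `R` is a commutative `G`-graded nil-good ring, then the graded Jacobson
radical is a graded-nil ideal: all its homogeneous elements are nilpotent. -/
theorem stmt10 {G R : Type*} [AddGroup G] [DecidableEq G] [CommRing R]
    (𝒜 : G → AddSubgroup R) [GradedRing 𝒜]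
    (hR : IsGradedNilGood 𝒜) :
    ∀ a ∈ gradedJacobson 𝒜, (∃ g, a ∈ 𝒜 g) → IsNilpotent a := by
  intro a ha hhom
  rcases subsingleton_or_nontrivial R with hsub | hnt
  · exact ⟨1, Subsingleton.elim _ _⟩
  rcases hR a hhom with h | ⟨u, n, hu, -, hn, -, rfl⟩
  · exact h
  · exfalso
    have hunit : IsUnit (u + n) := hn.isUnit_add_left_of_commute hu (Commute.all _ _)
    obtain ⟨M, hM⟩ := exists_gradedMaximal 𝒜
    have haM : u + n ∈ M := (sInf_le (by exact hM : M ∈ {I : Ideal R | IsGradedMaximal 𝒜 I})) ha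
    exact hM.2.1 (M.eq_top_of_isUnit_mem haM hunit)
end

section
/- Let R be a G-graded ring of finite support that is graded-local (has a unique graded-maximal right ideal). Then R is graded nil-good if and only if J^g(R) is a graded-nil ideal. -/
section Aux

variable {G R : Type*} [AddGroup G] [DecidableEq G] [Ring R]
  (𝒜 : G → AddSubgroup R) [GradedRing 𝒜]

lemma myProjMulRight {g : G} (d : G) (r : R) {x : R} (hx : x ∈ 𝒜 g) :
    (DirectSum.decompose 𝒜 (r * x) d : R) = (DirectSum.decompose 𝒜 r (d - g) : R) * x := by
  lift x to 𝒜 g using hx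
  rw [DirectSum.decompose_mul, DirectSum.decompose_coe]
  exact DirectSum.coe_mul_of_apply_aux _ _ _ fun y => eq_sub_iff_add_eq.symm

/-- Zorn: a homogeneous element generating a proper ideal lies in some ideal maximal among
proper homogeneous ideals. -/
lemma myZorn {x : R} (hx : ∃ g, x ∈ 𝒜 g) (hspan : Ideal.span {x} ≠ ⊤) :
    ∃ N : Ideal R, (Ideal.IsHomogeneous 𝒜 N ∧ N ≠ ⊤ ∧
      ∀ J : Ideal R, Ideal.IsHomogeneous 𝒜 J → J ≠ ⊤ → N ≤ J → J = N) ∧ x ∈ N := by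
  set s : Set (Ideal R) := {J | Ideal.IsHomogeneous 𝒜 J ∧ J ≠ ⊤ ∧ Ideal.span {x} ≤ J} with hs
  have hxs : Ideal.span {x} ∈ s := by
    refine ⟨Ideal.homogeneous_span 𝒜 _ ?_, hspan, le_rfl⟩
    rintro y hy
    rcases hy with rfl
    exact hx
  have hub : ∀ c ⊆ s, IsChain (· ≤ ·) c → ∀ y ∈ c, ∃ ub ∈ s, ∀ z ∈ c, z ≤ ub := by
    intro c hcs hchain y hyc
    refine ⟨sSup c, ⟨?_, ?_, ?_⟩, fun z hz => le_sSup hz⟩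
    · intro i r hr
      obtain ⟨J, hJc, hrJ⟩ := (Submodule.mem_sSup_of_directed ⟨y, hyc⟩ hchain.directedOn).mp hr
      exact le_sSup hJc ((hcs hJc).1 i hrJ)
    · intro htop
      have h1 : (1 : R) ∈ sSup c := htop ▸ Submodule.mem_top
      obtain ⟨J, hJc, hrJ⟩ := (Submodule.mem_sSup_of_directed ⟨y, hyc⟩ hchain.directedOn).mp h1
      exact (hcs hJc).2.1 ((Ideal.eq_top_iff_one J).mpr hrJ)
    · exact (hcs hyc).2.2.trans (le_sSup hyc)
  obtain ⟨N, hle, hNmax⟩ := zorn_le_nonempty₀ s hub _ hxs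
  refine ⟨N, ⟨hNmax.1.1, hNmax.1.2.1, ?_⟩, hle (Ideal.subset_span rfl)⟩
  intro J hJhom hJtop hNJ
  exact le_antisymm (hNmax.2 ⟨hJhom, hJtop, hNmax.1.2.2.trans hNJ⟩ hNJ) hNJ

/-- Projection: from `1 ∈ I ⊔ span {x}` with `I` homogeneous and `x ∈ 𝒜 g`,
extract a homogeneous relation in degree 0. -/
lemma myProjOne {I : Ideal R} (hI : Ideal.IsHomogeneous 𝒜 I) {g : G} {x : R} (hx : x ∈ 𝒜 g)
    (h1 : (1 : R) ∈ I ⊔ Ideal.span {x}) :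
    ∃ y m : R, y ∈ 𝒜 (-g) ∧ m ∈ I ∧ m ∈ 𝒜 0 ∧ m + y * x = 1 := by
  obtain ⟨m, hm, t, ht, hmt⟩ := Submodule.mem_sup.mp h1
  obtain ⟨r, rfl⟩ := Ideal.mem_span_singleton'.mp ht
  have h0 : (DirectSum.decompose 𝒜 (m + r * x) 0 : R) = 1 := by
    rw [hmt, DirectSum.decompose_of_mem_same 𝒜 (SetLike.GradedOne.one_mem)]
  rw [DirectSum.decompose_add, DirectSum.add_apply, AddMemClass.coe_add,
    myProjMulRight 𝒜 0 r hx, zero_sub] at h0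
  exact ⟨_, _, SetLike.coe_mem _, hI 0 hm, SetLike.coe_mem _, h0⟩

variable {M : Ideal R}
  (hM : Ideal.IsHomogeneous 𝒜 M ∧ M ≠ ⊤ ∧
    ∀ J : Ideal R, Ideal.IsHomogeneous 𝒜 J → J ≠ ⊤ → M ≤ J → J = M)
  (huniq : ∀ I : Ideal R, (Ideal.IsHomogeneous 𝒜 I ∧ I ≠ ⊤ ∧
    ∀ J : Ideal R, Ideal.IsHomogeneous 𝒜 J → J ≠ ⊤ → I ≤ J → J = I) → I = M)

include hM huniq

/-- Homogeneous elements generating a proper ideal lie in the unique graded-maximal ideal. -/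
lemma myMemM {x : R} (hx : ∃ g, x ∈ 𝒜 g) (hspan : Ideal.span {x} ≠ ⊤) : x ∈ M := by
  obtain ⟨N, hN, hxN⟩ := myZorn 𝒜 hx hspan
  exact (huniq N hN) ▸ hxN

/-- Step A1 : left-inverse of `1 - m` for degree-zero `m ∈ M`, of the same shape. -/
lemma myA1 {m : R} (hmM : m ∈ M) (hm0 : m ∈ 𝒜 0) :
    ∃ r m' : R, r ∈ 𝒜 0 ∧ r * (1 - m) = 1 ∧ m' ∈ M ∧ m' ∈ 𝒜 0 ∧ r = 1 - m' := by
  have h1m0 : (1 - m) ∈ 𝒜 0 := sub_mem SetLike.GradedOne.one_mem hm0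
  have hspan : Ideal.span {(1 : R) - m} = ⊤ := by
    by_contra hne
    have h1mM : (1 - m) ∈ M := myMemM 𝒜 hM huniq ⟨0, h1m0⟩ hne
    have h1M : (1 : R) ∈ M := by
      have := M.add_mem h1mM hmM
      rwa [sub_add_cancel] at this
    exact hM.2.1 ((Ideal.eq_top_iff_one M).mpr h1M)
  have h1 : (1 : R) ∈ Ideal.span {(1 : R) - m} := hspan ▸ Submodule.mem_top
  obtain ⟨a, ha⟩ := Ideal.mem_span_singleton'.mp h1
  have h0 : (DirectSum.decompose 𝒜 (a * (1 - m)) 0 : R) = 1 := by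
    rw [ha, DirectSum.decompose_of_mem_same 𝒜 (SetLike.GradedOne.one_mem)]
  rw [myProjMulRight 𝒜 0 a h1m0, sub_zero] at h0
  set r : R := (DirectSum.decompose 𝒜 a 0 : R) with hrdef
  have hrm : r * m ∈ 𝒜 0 := by
    have := SetLike.mul_mem_graded (SetLike.coe_mem (DirectSum.decompose 𝒜 a 0)) hm0
    rwa [add_zero] at this
  refine ⟨r, -(r * m), SetLike.coe_mem _, h0, M.neg_mem (Ideal.mul_mem_left M r hmM),
    AddSubgroup.neg_mem _ hrm, ?_⟩
  have h2 : r - r * m = 1 := by rw [← mul_one_sub]; exact h0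
  rw [sub_neg_eq_add]
  exact sub_eq_iff_eq_add.mp h2

/-- Step A : `1 - m` is a unit with homogeneous inverse for degree-zero `m ∈ M`. -/
lemma myA {m : R} (hmM : m ∈ M) (hm0 : m ∈ 𝒜 0) :
    ∃ r : R, r ∈ 𝒜 0 ∧ r * (1 - m) = 1 ∧ (1 - m) * r = 1 := by
  obtain ⟨r, m', hr0, hr, hm'M, hm'0, hrm'⟩ := myA1 𝒜 hM huniq hmM hm0
  obtain ⟨s, m'', hs0, hs, _, _, _⟩ := myA1 𝒜 hM huniq hm'M hm'0
  have hsr : s * r = 1 := by rw [hrm']; exact hs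
  have hseq : s = 1 - m := by
    calc s = s * (r * (1 - m)) := by rw [hr, mul_one]
    _ = s * r * (1 - m) := (mul_assoc _ _ _).symm
    _ = 1 - m := by rw [hsr, one_mul]
  exact ⟨r, hr0, hr, by rw [← hseq]; exact hsr⟩

/-- Step B-half : a homogeneous element not in `M` has a homogeneous left inverse. -/
lemma myBhalf {g : G} {x : R} (hx : x ∈ 𝒜 g) (hxM : x ∉ M) :
    ∃ z : R, z ∈ 𝒜 (-g) ∧ z * x = 1 := by
  have hJ : M ⊔ Ideal.span {x} = ⊤ := by
    by_contra hne
    have hhom : Ideal.IsHomogeneous 𝒜 (M ⊔ Ideal.span {x}) :=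
      Ideal.IsHomogeneous.sup hM.1 (Ideal.homogeneous_span 𝒜 _ (by rintro y rfl; exact ⟨g, hx⟩))
    have := hM.2.2 _ hhom hne le_sup_left
    exact hxM (this ▸ (le_sup_right (a := M) (Ideal.subset_span rfl)))
  have h1 : (1 : R) ∈ M ⊔ Ideal.span {x} := hJ ▸ Submodule.mem_top
  obtain ⟨y, m, hy, hmM, hm0, hymx⟩ := myProjOne 𝒜 hM.1 hx h1
  have hyx : y * x = 1 - m := by rw [← hymx]; abel
  obtain ⟨r, hr0, hr, _⟩ := myA 𝒜 hM huniq hmM hm0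
  refine ⟨r * y, ?_, ?_⟩
  · have := SetLike.mul_mem_graded hr0 hy
    rwa [zero_add] at this
  · rw [mul_assoc, hyx]; exact hr

/-- Step B : a homogeneous element not in `M` is a unit. -/
lemma myB {g : G} {x : R} (hx : x ∈ 𝒜 g) (hxM : x ∉ M) : IsUnit x := by
  obtain ⟨z, hz, hzx⟩ := myBhalf 𝒜 hM huniq hx hxM
  set e : R := x * z with he_def
  have he0 : e ∈ 𝒜 0 := by
    have := SetLike.mul_mem_graded hx hz
    rwa [add_neg_cancel] at this
  have hee : e * e = e := by
    calc e * e = x * (z * x) * z := by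
          rw [he_def, mul_assoc, mul_assoc, mul_assoc]
    _ = e := by rw [hzx, mul_one]
  by_cases hem : (1 - e) ∈ M
  · obtain ⟨r, hr0, hr, _⟩ := myA 𝒜 hM huniq hem (sub_mem SetLike.GradedOne.one_mem he0)
    rw [sub_sub_cancel] at hr
    have he1 : e = 1 := by
      calc e = 1 * e := (one_mul e).symm
      _ = r * e * e := by rw [hr]
      _ = r * e := by rw [mul_assoc, hee]
      _ = 1 := hr
    exact ⟨⟨x, z, he1, hzx⟩, rfl⟩
  · have h1e0 : (1 - e) ∈ 𝒜 0 := sub_mem SetLike.GradedOne.one_mem he0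
    obtain ⟨t, _, ht⟩ := myBhalf 𝒜 hM huniq h1e0 hem
    have hsq : (1 - e) * (1 - e) = 1 - e := by
      rw [mul_sub, mul_one, sub_mul, one_mul, hee, sub_self, sub_zero]
    have h1e1 : (1 : R) - e = 1 := by
      calc 1 - e = 1 * (1 - e) := (one_mul _).symm
      _ = t * (1 - e) * (1 - e) := by rw [ht]
      _ = t * (1 - e) := by rw [mul_assoc, hsq]
      _ = 1 := ht
    have he0' : e = 0 := by
      have := sub_eq_self.mp h1e1; exact this
    have hx0 : x = 0 := by
      have hex : e * x = x := by
        calc e * x = x * (z * x) := by rw [he_def, mul_assoc]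
        _ = x := by rw [hzx, mul_one]
      rw [he0', zero_mul] at hex; exact hex.symm
    have h01 : (0 : R) = 1 := by rw [← hzx, hx0, mul_zero]
    haveI : Subsingleton R := subsingleton_of_zero_eq_one h01
    exact isUnit_of_subsingleton x

end Aux

/-- A graded-local `G`-graded ring of finite support is graded nil-good if and only
if its graded Jacobson radical is a graded-nil ideal. -/
theorem stmt11 {G R : Type*} [AddGroup G] [DecidableEq G] [Ring R]
    (𝒜 : G → AddSubgroup R) [GradedRing 𝒜]
    (hfin : {g : G | 𝒜 g ≠ ⊥}.Finite)
    (hloc : ∃! I : Ideal R, IsGradedMaximal 𝒜 I) :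
    IsGradedNilGood 𝒜 ↔
      ∀ a ∈ gradedJacobson 𝒜, (∃ g, a ∈ 𝒜 g) → IsNilpotent a := by
  obtain ⟨M, hM, huniq⟩ := hloc
  have hM' : Ideal.IsHomogeneous 𝒜 M ∧ M ≠ ⊤ ∧
      ∀ J : Ideal R, Ideal.IsHomogeneous 𝒜 J → J ≠ ⊤ → M ≤ J → J = M := hM
  have huniq' : ∀ I : Ideal R, (Ideal.IsHomogeneous 𝒜 I ∧ I ≠ ⊤ ∧
      ∀ J : Ideal R, Ideal.IsHomogeneous 𝒜 J → J ≠ ⊤ → I ≤ J → J = I) → I = M :=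
    fun I h => huniq I h
  have hJM : gradedJacobson 𝒜 = M := by
    have hset : {I : Ideal R | IsGradedMaximal 𝒜 I} = {M} := by
      ext I
      simp only [Set.mem_setOf_eq, Set.mem_singleton_iff]
      exact ⟨fun h => huniq I h, fun h => h ▸ hM⟩
    rw [gradedJacobson, hset, sInf_singleton]
  constructor
  · intro hng a haJ hahom
    rw [hJM] at haJ
    rcases hng a hahom with hnil | ⟨u, n, hu, hug, hn, hng', heq⟩
    · exact hnil
    exfalso
    have hnM : n ∈ M := by
      by_contra hnM
      obtain ⟨gn, hgn⟩ := hng'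
      have hun : IsUnit n := myB 𝒜 hM' huniq' hgn hnM
      obtain ⟨k, hk⟩ := hn
      have hunit : IsUnit (n ^ k) := hun.pow k
      rw [hk] at hunit
      have h01 : (0 : R) = 1 := isUnit_zero_iff.mp hunit
      haveI := subsingleton_of_zero_eq_one h01
      exact hM'.2.1 (Subsingleton.elim _ _)
    have huM : u ∈ M := by
      have hu' : u = a - n := by rw [heq]; abel
      rw [hu']; exact M.sub_mem haJ hnM
    exact hM'.2.1 (Ideal.eq_top_of_isUnit_mem M huM hu)
  · intro hnil a hahom
    by_cases haM : a ∈ M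
    · exact Or.inl (hnil a (hJM ▸ haM) hahom)
    · obtain ⟨g, hg⟩ := hahom
      exact Or.inr ⟨a, 0, myB 𝒜 hM' huniq' hg haM, ⟨g, hg⟩, IsNilpotent.zero,
        ⟨g, (𝒜 g).zero_mem⟩, (add_zero a).symm⟩
end

section
/- Let A be a G-graded ring, E a G-graded A-module, and R = A ⋉ E the trivial ring extension with grading R_g = A_g ⊕ E_g. Then A is graded nil-good if and only if R is graded nil-good. -/
/-- The `g`-component `A_g ⊕ E_g` of the trivial ring extension `A ⋉ E`. -/
def gradeTE {G A E : Type*} [Ring A] [AddCommGroup E] [Module A E] [Module Aᵐᵒᵖ E]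
    (𝒜 : G → AddSubgroup A) (ℰ : G → AddSubgroup E) (g : G) :
    AddSubgroup (TrivSqZeroExt A E) where
  carrier := {x | x.fst ∈ 𝒜 g ∧ x.snd ∈ ℰ g}
  add_mem' := fun hx hy =>
    ⟨by rw [TrivSqZeroExt.fst_add]; exact add_mem hx.1 hy.1,
     by rw [TrivSqZeroExt.snd_add]; exact add_mem hx.2 hy.2⟩
  zero_mem' :=
    ⟨by rw [TrivSqZeroExt.fst_zero]; exact zero_mem _,
     by rw [TrivSqZeroExt.snd_zero]; exact zero_mem _⟩
  neg_mem' := fun hx =>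
    ⟨by rw [TrivSqZeroExt.fst_neg]; exact neg_mem hx.1,
     by rw [TrivSqZeroExt.snd_neg]; exact neg_mem hx.2⟩

open TrivSqZeroExt

lemma tsze_isNilpotent_iff {A E : Type*} [Ring A] [AddCommGroup E] [Module A E]
    [Module Aᵐᵒᵖ E] (x : TrivSqZeroExt A E) : IsNilpotent x ↔ IsNilpotent x.fst := by
  constructor
  · rintro ⟨k, hk⟩
    exact ⟨k, by rw [← fst_pow, hk, fst_zero]⟩
  · rintro ⟨k, hk⟩
    refine ⟨2 * k + 1, TrivSqZeroExt.ext ?_ ?_⟩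
    · rw [fst_pow, fst_zero, show 2 * k + 1 = k + (k + 1) by omega, pow_add, hk, zero_mul]
    · rw [snd_pow_eq_sum, snd_zero]
      apply List.sum_eq_zero
      intro y hy
      simp only [List.mem_map, List.mem_range] at hy
      obtain ⟨i, hi, rfl⟩ := hy
      simp only [Nat.pred_succ]
      rcases le_or_gt k i with h | h
      · have h0 : x.fst ^ i = 0 := by
          rw [← Nat.add_sub_cancel' h, pow_add, hk, zero_mul]
        simp [h0]
      · have h0 : x.fst ^ (2 * k - i) = 0 := by
          have hle : k ≤ 2 * k - i := by omega
          rw [← Nat.add_sub_cancel' hle, pow_add, hk, zero_mul]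
        simp [h0]

lemma homog_decomp_aux {G A : Type*} [AddGroup G] [DecidableEq G] [Ring A]
    (𝒜 : G → AddSubgroup A) [GradedRing 𝒜] {a u n : A} {g g₁ g₂ : G}
    (ha : a ∈ 𝒜 g) (hu : u ∈ 𝒜 g₁) (hn : n ∈ 𝒜 g₂) (huu : IsUnit u)
    (heq : a = u + n) : a = 0 ∨ (u ∈ 𝒜 g ∧ n ∈ 𝒜 g) := by
  by_cases h1 : g₁ = g
  · subst h1
    exact Or.inr ⟨hu, by have hn' : n = a - u := by rw [heq, add_sub_cancel_left]
                         rw [hn']; exact sub_mem ha hu⟩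
  · left
    have hproj : (DirectSum.decompose 𝒜 a g₁ : A) = 0 :=
      DirectSum.decompose_of_mem_ne 𝒜 ha (Ne.symm h1)
    have hadd : (DirectSum.decompose 𝒜 a g₁ : A)
        = (DirectSum.decompose 𝒜 u g₁ : A) + (DirectSum.decompose 𝒜 n g₁ : A) := by
      rw [heq, DirectSum.decompose_add]; rfl
    rw [DirectSum.decompose_of_mem_same 𝒜 hu] at hadd
    by_cases h2 : g₂ = g₁
    · subst h2
      rw [DirectSum.decompose_of_mem_same 𝒜 hn] at hadd
      rw [heq, ← hadd, hproj]
    · rw [DirectSum.decompose_of_mem_ne 𝒜 hn h2, add_zero] at hadd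
      have hu0 : u = 0 := by rw [← hadd, hproj]
      rw [hu0] at huu
      have : (0 : A) = 1 := isUnit_zero_iff.mp huu
      have : Subsingleton A := subsingleton_of_zero_eq_one this
      exact Subsingleton.elim a 0

/-- Let `A` be a `G`-graded ring, `E` a `G`-graded `A`-module and `R = A ⋉ E` the
trivial ring extension with grading `R_g = A_g ⊕ E_g`. Then `A` is graded nil-good
if and only if `R` is graded nil-good. -/
theorem stmt13 {G A E : Type*} [AddGroup G] [DecidableEq G] [Ring A] [AddCommGroup E]
    [Module A E] [Module Aᵐᵒᵖ E] [SMulCommClass A Aᵐᵒᵖ E]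
    (𝒜 : G → AddSubgroup A) [GradedRing 𝒜]
    (ℰ : G → AddSubgroup E) [DirectSum.Decomposition ℰ]
    (hsmul : ∀ g h : G, ∀ a ∈ 𝒜 g, ∀ x ∈ ℰ h, a • x ∈ ℰ (g + h))
    (hsmulop : ∀ g h : G, ∀ a ∈ 𝒜 g, ∀ x ∈ ℰ h,
      MulOpposite.op a • x ∈ ℰ (h + g)) :
    IsGradedNilGood 𝒜 ↔ IsGradedNilGood (gradeTE 𝒜 ℰ) := by
  constructor
  · intro hA x ⟨g, hxg⟩
    obtain ⟨hx1, hx2⟩ := hxg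
    rcases hA x.fst ⟨g, hx1⟩ with hnil | ⟨u, n, hu, ⟨g₁, hug⟩, hn, ⟨g₂, hng⟩, heq⟩
    · exact Or.inl ((tsze_isNilpotent_iff x).mpr hnil)
    · rcases homog_decomp_aux 𝒜 hx1 hug hng hu heq with h0 | ⟨hu', hn'⟩
      · exact Or.inl ((tsze_isNilpotent_iff x).mpr (h0 ▸ IsNilpotent.zero))
      · right
        refine ⟨inl u, (show TrivSqZeroExt A E from (n, x.snd)), ?_, ⟨g, ?_⟩, ?_, ⟨g, ?_⟩, ?_⟩
        · rw [isUnit_inl_iff]; exact hu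
        · exact ⟨by simpa using hu', by simpa using (ℰ g).zero_mem⟩
        · rw [tsze_isNilpotent_iff]; exact hn
        · exact ⟨hn', hx2⟩
        · exact TrivSqZeroExt.ext (heq.trans rfl) ((zero_add x.snd).symm.trans rfl)
  · intro hR a ⟨g, hag⟩
    have hx : (inl a : TrivSqZeroExt A E) ∈ gradeTE 𝒜 ℰ g :=
      ⟨by simpa using hag, by simpa using (ℰ g).zero_mem⟩
    rcases hR (inl a) ⟨g, hx⟩ with hnil | ⟨u, n, hu, ⟨g₁, hug⟩, hn, ⟨g₂, hng⟩, heq⟩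
    · left
      have := (tsze_isNilpotent_iff (inl a : TrivSqZeroExt A E)).mp hnil
      simpa using this
    · right
      refine ⟨u.fst, n.fst, ?_, ⟨g₁, hug.1⟩, ?_, ⟨g₂, hng.1⟩, ?_⟩
      · exact isUnit_iff_isUnit_fst.mp hu
      · exact (tsze_isNilpotent_iff n).mp hn
      · have := congrArg TrivSqZeroExt.fst heq
        simpa using this
end

section
/- Let A be a ring and E an A-bimodule (or A-module with A commutative), and R = A ⋉ E the trivial ring extension. Then R is nil-good if and only if A is nil-good. -/
lemma isNilpotent_iff_fst' {A E : Type*} [Ring A] [AddCommGroup E]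
    [Module A E] [Module Aᵐᵒᵖ E] [SMulCommClass A Aᵐᵒᵖ E]
    {x : TrivSqZeroExt A E} : IsNilpotent x ↔ IsNilpotent x.fst := by
  constructor
  · rintro ⟨n, hn⟩
    exact ⟨n, by rw [← TrivSqZeroExt.fst_pow, hn, TrivSqZeroExt.fst_zero]⟩
  · rintro ⟨n, hn⟩
    refine ⟨2 * n, ?_⟩
    have h1 : (x ^ n).fst = 0 := by rw [TrivSqZeroExt.fst_pow, hn]
    have h2 : x ^ n = TrivSqZeroExt.inr (x ^ n).snd := by
      ext <;> simp [h1]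
    rw [two_mul, pow_add, h2, TrivSqZeroExt.inr_mul_inr]

/-- The trivial ring extension `R = A ⋉ E` is nil-good if and only if `A` is
nil-good. -/
theorem stmt14 {A E : Type*} [Ring A] [AddCommGroup E]
    [Module A E] [Module Aᵐᵒᵖ E] [SMulCommClass A Aᵐᵒᵖ E] :
    IsNilGood (TrivSqZeroExt A E) ↔ IsNilGood A := by
  constructor
  · intro h a
    rcases h (TrivSqZeroExt.inl a) with hn | ⟨u, n, hu, hn, he⟩
    · left
      simpa using isNilpotent_iff_fst'.mp hn
    · right
      refine ⟨u.fst, n.fst, TrivSqZeroExt.isUnit_iff_isUnit_fst.mp hu,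
        isNilpotent_iff_fst'.mp hn, ?_⟩
      have := congrArg TrivSqZeroExt.fst he
      simpa using this
  · intro h x
    rcases h x.fst with hn | ⟨u, n, hu, hn, he⟩
    · left
      exact isNilpotent_iff_fst'.mpr hn
    · right
      refine ⟨TrivSqZeroExt.inl u, ⟨n, x.snd⟩, TrivSqZeroExt.isUnit_inl_iff.mpr hu,
        isNilpotent_iff_fst'.mpr hn, ?_⟩
      ext
      · exact he
      · exact (zero_add x.snd).symm
end

section
/- Let R = ⊕_{g∈G} R_g be a G-graded ring in which every unit and every nilpotent element of R is homogeneous. If the group ring R[G] (with its natural G-grading) is graded nil-good, then R is graded nil-good. -/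
/-- The `g`-component `Σ_{h ∈ G} R_{g - h}·h` of the natural `G`-grading of the
group ring `R[G]`. -/
def groupRingGrade {G R : Type*} [AddCommGroup G] [Ring R] (𝒜 : G → AddSubgroup R)
    (g : G) : AddSubgroup (AddMonoidAlgebra R G) where
  carrier := {x | ∀ h : G, x.coeff h ∈ 𝒜 (g - h)}
  add_mem' := fun hx hy h => by
    rw [AddMonoidAlgebra.coeff_add, Finsupp.add_apply]; exact add_mem (hx h) (hy h)
  zero_mem' := fun h => by
    rw [AddMonoidAlgebra.coeff_zero, Finsupp.zero_apply]; exact zero_mem _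
  neg_mem' := fun hx h => by
    rw [AddMonoidAlgebra.coeff_neg, Finsupp.neg_apply]; exact neg_mem (hx h)

/-- Let `R` be a `G`-graded ring in which every unit and every nilpotent element of
`R` is homogeneous. If the group ring `R[G]`, with its natural `G`-grading, is
graded nil-good, then `R` is graded nil-good. -/
theorem stmt17 {G R : Type*} [AddCommGroup G] [DecidableEq G] [Ring R]
    (𝒜 : G → AddSubgroup R) [GradedRing 𝒜]
    (hu : ∀ u : R, IsUnit u → ∃ g, u ∈ 𝒜 g)
    (hn : ∀ n : R, IsNilpotent n → ∃ g, n ∈ 𝒜 g)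
    (h : IsGradedNilGood (groupRingGrade 𝒜)) :
    IsGradedNilGood 𝒜 := by
  intro a ⟨g, hg⟩
  -- the augmentation map `ε : R[G] → R`
  set ε : AddMonoidAlgebra R G →+* R :=
    AddMonoidAlgebra.liftNCRingHom (RingHom.id R) 1 (fun x y => by simp [Commute, SemiconjBy])
    with hε
  have hεs : ∀ (g' : G) (r : R), ε (AddMonoidAlgebra.single g' r) = r := by
    intro g' r
    simp [hε, AddMonoidAlgebra.liftNCRingHom, AddMonoidAlgebra.liftNC_single]
  -- `single 0 a` is homogeneous of degree `g` in the group ring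
  have hmem : (AddMonoidAlgebra.single (0 : G) a : AddMonoidAlgebra R G) ∈
      groupRingGrade 𝒜 g := by
    intro h'
    classical
    by_cases hh : h' = 0
    · subst hh; simpa using hg
    · rw [AddMonoidAlgebra.coeff_single, Finsupp.single_apply, if_neg (fun e => hh e.symm)]
      exact zero_mem _
  rcases h (AddMonoidAlgebra.single (0 : G) a) ⟨g, hmem⟩ with hnil | ⟨u, n, hu', _, hn', _, heq⟩
  · left
    obtain ⟨k, hk⟩ := hnil
    refine ⟨k, ?_⟩
    have := congrArg ε hk
    rw [map_pow, hεs, map_zero] at this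
    exact this
  · right
    have ha : a = ε u + ε n := by
      have := congrArg ε heq
      rwa [hεs, map_add] at this
    have hu2 : IsUnit (ε u) := hu'.map ε
    have hn2 : IsNilpotent (ε n) := hn'.map ε
    exact ⟨ε u, ε n, hu2, hu _ hu2, hn2, hn _ hn2, ha⟩
end
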